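/- Let G = (V,E) be an undirected graph and for V' ⊆ V define the graph G*(V') on vertex set V' with an edge {u,v} (u ≠ v in V') if and only if there exists a path between u and v in G all of whose intermediate vertices lie in V − V'. Then for V'' ⊆ V' ⊆ V, one has G*(V'') = (G*(V'))*(V''), i.e., the operation of forming G* is transitive under nested vertex subsets. -/

import Mathlib

/-- The graph `G*(S)` on vertex subset `S`: distinct `u, v ∈ S` are adjacent iff
there is a path (walk) between `u` and `v` in `G` all of whose intermediate
vertices lie outside `S`. Vertices outside `S` are isolated. -/
def GStar {V : Type} (G : SimpleGraph V) (S : Set V) : SimpleGraph V where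
  Adj u v := u ≠ v ∧ u ∈ S ∧ v ∈ S ∧
    ∃ p : G.Walk u v, ∀ x ∈ p.support, x ≠ u → x ≠ v → x ∉ S
  symm := ⟨by
    rintro u v ⟨hne, hu, hv, p, hp⟩
    refine ⟨hne.symm, hv, hu, p.reverse, ?_⟩
    intro x hx hxv hxu
    exact hp x (by simpa [SimpleGraph.Walk.support_reverse] using hx) hxu hxv⟩
  loopless := ⟨fun u h => h.1 rfl⟩

/-- `a` and `b` are joined by a walk in `G` whose vertices all lie in `A`
(i.e. they are in the same component of the induced subgraph on `A`). -/
def ReachIn {V : Type} (G : SimpleGraph V) (A : Set V) (a b : V) : Prop :=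
  ∃ p : G.Walk a b, ∀ x ∈ p.support, x ∈ A

/-- From a walk in `G*(V')` we get a walk in `G` whose vertices either lie on
the original walk or lie outside `V'`. -/
lemma lemA {V : Type} (G : SimpleGraph V) (V' : Set V) {u v : V}
    (q : (GStar G V').Walk u v) :
    ∃ p : G.Walk u v, ∀ x ∈ p.support, x ∈ q.support ∨ x ∉ V' := by
  induction q with
  | nil => exact ⟨SimpleGraph.Walk.nil, by simp⟩
  | @cons a b c hadj q' ih =>
    obtain ⟨hne, ha, hb, p₀, hp₀⟩ := hadj
    obtain ⟨p', hp'⟩ := ih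
    refine ⟨p₀.append p', ?_⟩
    intro x hx
    rw [SimpleGraph.Walk.mem_support_append_iff] at hx
    rcases hx with hx | hx
    · by_cases hxa : x = a
      · subst hxa; left; simp
      · by_cases hxb : x = b
        · subst hxb; left; exact List.mem_cons_of_mem _ (SimpleGraph.Walk.start_mem_support _)
        · exact Or.inr (hp₀ x hx hxa hxb)
    · rcases hp' x hx with h1 | h1
      · left; exact List.mem_cons_of_mem _ h1
      · exact Or.inr h1

/-- Split a walk ending in `V'` at the first vertex belonging to `V'`. -/
lemma lemB' {V : Type} (G : SimpleGraph V) (V' : Set V) {w v : V}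
    (p : G.Walk w v) : v ∈ V' →
    ∃ (y : V) (p₁ : G.Walk w y) (p₂ : G.Walk y v),
      y ∈ V' ∧ (∀ x ∈ p₁.support, x ≠ y → x ∉ V') ∧ p₂.length ≤ p.length ∧
      (∀ x ∈ p₁.support, x ∈ p.support) ∧ (∀ x ∈ p₂.support, x ∈ p.support) := by
  induction p with
  | nil =>
    intro hv
    exact ⟨_, SimpleGraph.Walk.nil, SimpleGraph.Walk.nil, hv, by simp, le_refl _,
      by simp, by simp⟩
  | @cons a b c hadj p' ih =>
    intro hv
    by_cases ha : a ∈ V'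
    · exact ⟨a, SimpleGraph.Walk.nil, .cons hadj p', ha, by simp, le_refl _,
        by simp, fun x hx => hx⟩
    · obtain ⟨y, p₁, p₂, hy, h1, h2, h3, h4⟩ := ih hv
      refine ⟨y, .cons hadj p₁, p₂, hy, ?_, ?_, ?_, ?_⟩
      · intro x hx hxy
        rw [SimpleGraph.Walk.support_cons, List.mem_cons] at hx
        rcases hx with rfl | hx
        · exact ha
        · exact h1 x hx hxy
      · simpa using Nat.le_succ_of_le h2
      · intro x hx
        rw [SimpleGraph.Walk.support_cons, List.mem_cons] at hx ⊢
        rcases hx with rfl | hx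
        · exact Or.inl rfl
        · exact Or.inr (h3 x hx)
      · intro x hx
        rw [SimpleGraph.Walk.support_cons, List.mem_cons]
        exact Or.inr (h4 x hx)

/-- From a walk in `G` between vertices of `V'` we get a walk in `G*(V')`
whose vertices lie on the original walk and in `V'`. -/
lemma lemB {V : Type} (G : SimpleGraph V) (V' : Set V) :
    ∀ (n : ℕ) {u v : V} (p : G.Walk u v), p.length ≤ n → u ∈ V' → v ∈ V' →
      ∃ q : (GStar G V').Walk u v, ∀ x ∈ q.support, x ∈ p.support ∧ x ∈ V' := by
  intro n
  induction n with
  | zero =>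
    intro u v p hlen hu hv
    cases p with
    | nil => exact ⟨SimpleGraph.Walk.nil, by simp [hu]⟩
    | cons hadj p' => simp at hlen
  | succ n ih =>
    intro u v p hlen hu hv
    cases p with
    | nil => exact ⟨SimpleGraph.Walk.nil, by simp [hu]⟩
    | @cons _ b _ hadj p' =>
      have hlen' : p'.length ≤ n := by
        simpa using Nat.le_of_succ_le_succ (by simpa using hlen)
      obtain ⟨y, p₁, p₂, hy, h1, h2, h3, h4⟩ := lemB' G V' p' hv
      by_cases huy : u = y
      · subst huy
        obtain ⟨q, hq⟩ := ih p₂ (le_trans h2 hlen') hu hv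
        refine ⟨q, fun x hx => ?_⟩
        obtain ⟨hxp, hxV⟩ := hq x hx
        refine ⟨?_, hxV⟩
        rw [SimpleGraph.Walk.support_cons, List.mem_cons]
        exact Or.inr (h4 x hxp)
      · have hadj2 : (GStar G V').Adj u y := by
          refine ⟨huy, hu, hy, .cons hadj p₁, ?_⟩
          intro x hx hxu hxy
          rw [SimpleGraph.Walk.support_cons, List.mem_cons] at hx
          rcases hx with rfl | hx
          · exact absurd rfl hxu
          · exact h1 x hx hxy
        obtain ⟨q, hq⟩ := ih p₂ (le_trans h2 hlen') hy hv
        refine ⟨.cons hadj2 q, fun x hx => ?_⟩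
        rw [SimpleGraph.Walk.support_cons, List.mem_cons] at hx
        rcases hx with rfl | hx
        · exact ⟨by simp, hu⟩
        · obtain ⟨hxp, hxV⟩ := hq x hx
          refine ⟨?_, hxV⟩
          rw [SimpleGraph.Walk.support_cons, List.mem_cons]
          exact Or.inr (h4 x hxp)

/-- For nested vertex subsets `V'' ⊆ V' ⊆ V`,
`G*(V'') = (G*(V'))*(V'')`. -/
theorem stmt_3 {V : Type} (G : SimpleGraph V) (V' V'' : Set V) (h : V'' ⊆ V') :
    GStar G V'' = GStar (GStar G V') V'' := by
  ext u v
  constructor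
  · rintro ⟨hne, hu, hv, p, hp⟩
    obtain ⟨q, hq⟩ := lemB G V' p.length p (le_refl _) (h hu) (h hv)
    refine ⟨hne, hu, hv, q, ?_⟩
    intro x hx hxu hxv
    exact hp x (hq x hx).1 hxu hxv
  · rintro ⟨hne, hu, hv, q, hq⟩
    obtain ⟨p, hp⟩ := lemA G V' q
    refine ⟨hne, hu, hv, p, ?_⟩
    intro x hx hxu hxv
    rcases hp x hx with h1 | h1
    · exact hq x h1 hxu hxv
    · exact fun hx'' => h1 (h hx'')
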